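/- Let k ∈ ℝ³ with κ := ‖k‖ > 0, Z ∈ ℝ³ with ⟨k, Z⟩ = 0, and let Z_k(x) := cos(⟨k, x⟩)·Z + κ⁻¹·sin(⟨k, x⟩)·(Z × k). Let d_e > 0 and d_i ≥ 0. Define v := Z_k, B* := Z_k, B := (1 + d_e²·κ²)⁻¹·Z_k, and p := −‖Z_k‖²/2. Then this is a stationary solution of incompressible extended MHD: (a) B* = B + d_e²·curl(curl B); (b) (v·∇)v + ∇p + B* × (curl B) = 0; (c) curl(B* × (v − d_i·curl B)) + d_e²·curl((curl v) × (curl B)) = 0; (d) div v = div B* = div B = 0. -/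

import Mathlib

noncomputable section

open MeasureTheory Real

/-- Euclidean 3-space. -/
abbrev E3 : Type := EuclideanSpace ℝ (Fin 3)

/-- Build a vector in `E3` from three coordinates. -/
def mk3 (a b c : ℝ) : E3 := (WithLp.equiv 2 (Fin 3 → ℝ)).symm ![a, b, c]

/-- Partial derivative in the `i`-th coordinate direction. -/
def pd (i : Fin 3) (f : E3 → ℝ) (x : E3) : ℝ :=
  fderiv ℝ f x (EuclideanSpace.single i 1)

/-- Curl of a vector field on `ℝ³`. -/
def ecurl (f : E3 → E3) (x : E3) : E3 :=
  mk3 (pd 1 (fun y => f y 2) x - pd 2 (fun y => f y 1) x)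
      (pd 2 (fun y => f y 0) x - pd 0 (fun y => f y 2) x)
      (pd 0 (fun y => f y 1) x - pd 1 (fun y => f y 0) x)

/-- Divergence of a vector field on `ℝ³`. -/
def ediv (f : E3 → E3) (x : E3) : ℝ :=
  pd 0 (fun y => f y 0) x + pd 1 (fun y => f y 1) x + pd 2 (fun y => f y 2) x

/-- Gradient of a scalar field on `ℝ³`. -/
def egrad (h : E3 → ℝ) (x : E3) : E3 :=
  mk3 (pd 0 h x) (pd 1 h x) (pd 2 h x)

/-- Cross product on `ℝ³`. -/
def cross3 (u w : E3) : E3 :=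
  mk3 (u 1 * w 2 - u 2 * w 1) (u 2 * w 0 - u 0 * w 2) (u 0 * w 1 - u 1 * w 0)

/-- Advection `(g · ∇) f` of a vector field `f` along the vector `g`. -/
def advect (g : E3) (f : E3 → E3) (x : E3) : E3 :=
  mk3 (∑ j, g j * pd j (fun y => f y 0) x)
      (∑ j, g j * pd j (fun y => f y 1) x)
      (∑ j, g j * pd j (fun y => f y 2) x)

/-- Componentwise Laplacian of a vector field on `ℝ³`. -/
def elap (f : E3 → E3) (x : E3) : E3 :=
  mk3 (∑ i, pd i (fun y => pd i (fun z => f z 0) y) x)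
      (∑ i, pd i (fun y => pd i (fun z => f z 1) y) x)
      (∑ i, pd i (fun y => pd i (fun z => f z 2) y) x)

/-- Time derivative of a time-dependent vector field. -/
def tderiv (f : ℝ → E3 → E3) (t : ℝ) (x : E3) : E3 :=
  deriv (fun s => f s x) t

lemma mk3_0 (a b c : ℝ) : mk3 a b c 0 = a := by simp [mk3]
lemma mk3_1 (a b c : ℝ) : mk3 a b c 1 = b := by simp [mk3]
lemma mk3_2 (a b c : ℝ) : mk3 a b c 2 = c := by simp [mk3]

lemma mk3_zero : mk3 0 0 0 = 0 := by
  ext i; fin_cases i <;> simp [mk3]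

lemma pd_const (c : ℝ) (j : Fin 3) (x : E3) : pd j (fun _ => c) x = 0 := by simp [pd]

lemma cross_parallel (u : E3) (a b : ℝ) : cross3 (a • u) (b • u) = 0 := by
  ext i; fin_cases i <;> (simp [cross3, mk3]; ring)

lemma ecurl_zero (x : E3) : ecurl (fun _ => (0:E3)) x = 0 := by
  have h : ∀ (i j : Fin 3), pd j (fun _ : E3 => (0:E3) i) x = 0 := fun i j => by
    simpa using pd_const 0 j x
  ext i; fin_cases i <;> simp [ecurl, mk3, h, pd_const]

lemma pd_trig (k : E3) (a b : ℝ) (j : Fin 3) (x : E3) :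
    pd j (fun y => a * Real.cos (inner ℝ k y : ℝ) + b * Real.sin (inner ℝ k y : ℝ)) x
      = k j * (b * Real.cos (inner ℝ k x : ℝ) - a * Real.sin (inner ℝ k x : ℝ)) := by
  have hθ : HasFDerivAt (fun y : E3 => (inner ℝ k y : ℝ)) (innerSL ℝ k) x :=
    (innerSL ℝ k).hasFDerivAt
  have hcos := (Real.hasDerivAt_cos ((inner ℝ k x : ℝ))).comp_hasFDerivAt x hθ
  have hsin := (Real.hasDerivAt_sin ((inner ℝ k x : ℝ))).comp_hasFDerivAt x hθ
  have h : HasFDerivAt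
      (fun y : E3 => a * Real.cos (inner ℝ k y : ℝ) + b * Real.sin (inner ℝ k y : ℝ))
      (a • (-Real.sin (inner ℝ k x : ℝ)) • innerSL ℝ k
        + b • Real.cos (inner ℝ k x : ℝ) • innerSL ℝ k) x :=
    (hcos.const_mul a).add (hsin.const_mul b)
  unfold pd
  rw [h.fderiv]
  simp [EuclideanSpace.inner_single_right]
  ring

lemma pd_wave (k Z : E3) (Zk : E3 → E3)
    (hZk : ∀ x, Zk x = Real.cos (inner ℝ k x : ℝ) • Z
        + (‖k‖⁻¹ * Real.sin (inner ℝ k x : ℝ)) • cross3 Z k)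
    (f : E3 → E3) (a : ℝ) (hf : ∀ y, f y = a • Zk y) (i j : Fin 3) (x : E3) :
    pd j (fun y => f y i) x
      = k j * ((a * (‖k‖⁻¹ * cross3 Z k i)) * Real.cos (inner ℝ k x : ℝ)
          - (a * Z i) * Real.sin (inner ℝ k x : ℝ)) := by
  have hfun : (fun y => f y i)
      = fun y => (a * Z i) * Real.cos (inner ℝ k y : ℝ)
          + (a * (‖k‖⁻¹ * cross3 Z k i)) * Real.sin (inner ℝ k y : ℝ) := by
    funext y
    rw [hf y, hZk y]
    simp
    ring
  rw [hfun, pd_trig]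

lemma ecurl_wave (k Z : E3) (hk : 0 < ‖k‖) (hkZ : (inner ℝ k Z : ℝ) = 0)
    (Zk : E3 → E3)
    (hZk : ∀ x, Zk x = Real.cos (inner ℝ k x : ℝ) • Z
        + (‖k‖⁻¹ * Real.sin (inner ℝ k x : ℝ)) • cross3 Z k)
    (f : E3 → E3) (a : ℝ) (hf : ∀ y, f y = a • Zk y) (x : E3) :
    ecurl f x = (a * ‖k‖) • Zk x := by
  have hKne : ‖k‖ ≠ 0 := ne_of_gt hk
  have hKK : ‖k‖ * ‖k‖⁻¹ = 1 := mul_inv_cancel₀ hKne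
  have hip : k 0 * Z 0 + k 1 * Z 1 + k 2 * Z 2 = 0 := by
    simpa [PiLp.inner_apply, Fin.sum_univ_three, RCLike.inner_apply, mul_comm] using hkZ
  have hK2 : ‖k‖^2 = k 0^2 + k 1^2 + k 2^2 := by
    rw [← real_inner_self_eq_norm_sq]
    simp only [PiLp.inner_apply, RCLike.inner_apply, conj_trivial, Fin.sum_univ_three]; ring
  have hpd := fun i j => pd_wave k Z Zk hZk f a hf i j x
  set c := Real.cos (inner ℝ k x : ℝ) with hc
  set s := Real.sin (inner ℝ k x : ℝ) with hs
  ext i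
  fin_cases i
  · show ecurl f x 0 = ((a * ‖k‖) • Zk x) 0
    rw [ecurl, mk3_0, hpd 2 1, hpd 1 2, hZk x]
    simp only [PiLp.smul_apply, PiLp.add_apply, smul_eq_mul, cross3, mk3_0, mk3_1, mk3_2]
    linear_combination (-(a*c*‖k‖⁻¹*(k 0))) * hip + (-(a*c*‖k‖⁻¹*(Z 0))) * hK2
      + (a*c*(Z 0)*‖k‖ - a*s*(Z 1 * k 2 - Z 2 * k 1)) * hKK
  · show ecurl f x 1 = ((a * ‖k‖) • Zk x) 1
    rw [ecurl, mk3_1, hpd 0 2, hpd 2 0, hZk x]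
    simp only [PiLp.smul_apply, PiLp.add_apply, smul_eq_mul, cross3, mk3_0, mk3_1, mk3_2]
    linear_combination (-(a*c*‖k‖⁻¹*(k 1))) * hip + (-(a*c*‖k‖⁻¹*(Z 1))) * hK2
      + (a*c*(Z 1)*‖k‖ - a*s*(Z 2 * k 0 - Z 0 * k 2)) * hKK
  · show ecurl f x 2 = ((a * ‖k‖) • Zk x) 2
    rw [ecurl, mk3_2, hpd 1 0, hpd 0 1, hZk x]
    simp only [PiLp.smul_apply, PiLp.add_apply, smul_eq_mul, cross3, mk3_0, mk3_1, mk3_2]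
    linear_combination (-(a*c*‖k‖⁻¹*(k 2))) * hip + (-(a*c*‖k‖⁻¹*(Z 2))) * hK2
      + (a*c*(Z 2)*‖k‖ - a*s*(Z 0 * k 1 - Z 1 * k 0)) * hKK

lemma ediv_wave (k Z : E3) (hk : 0 < ‖k‖) (hkZ : (inner ℝ k Z : ℝ) = 0)
    (Zk : E3 → E3)
    (hZk : ∀ x, Zk x = Real.cos (inner ℝ k x : ℝ) • Z
        + (‖k‖⁻¹ * Real.sin (inner ℝ k x : ℝ)) • cross3 Z k)
    (f : E3 → E3) (a : ℝ) (hf : ∀ y, f y = a • Zk y) (x : E3) :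
    ediv f x = 0 := by
  have hip : k 0 * Z 0 + k 1 * Z 1 + k 2 * Z 2 = 0 := by
    simpa [PiLp.inner_apply, Fin.sum_univ_three, RCLike.inner_apply, mul_comm] using hkZ
  have hpd := fun i j => pd_wave k Z Zk hZk f a hf i j x
  set c := Real.cos (inner ℝ k x : ℝ) with hc
  set s := Real.sin (inner ℝ k x : ℝ) with hs
  rw [ediv, hpd 0 0, hpd 1 1, hpd 2 2]
  simp only [cross3, mk3_0, mk3_1, mk3_2]
  linear_combination (-(a*s)) * hip

lemma advect_wave (k Z : E3) (hk : 0 < ‖k‖) (hkZ : (inner ℝ k Z : ℝ) = 0)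
    (Zk : E3 → E3)
    (hZk : ∀ x, Zk x = Real.cos (inner ℝ k x : ℝ) • Z
        + (‖k‖⁻¹ * Real.sin (inner ℝ k x : ℝ)) • cross3 Z k)
    (f : E3 → E3) (a : ℝ) (hf : ∀ y, f y = a • Zk y) (x : E3) :
    advect (Zk x) f x = 0 := by
  have hip : k 0 * Z 0 + k 1 * Z 1 + k 2 * Z 2 = 0 := by
    simpa [PiLp.inner_apply, Fin.sum_univ_three, RCLike.inner_apply, mul_comm] using hkZ
  have hpd := fun i j => pd_wave k Z Zk hZk f a hf i j x
  set c := Real.cos (inner ℝ k x : ℝ) with hc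
  set s := Real.sin (inner ℝ k x : ℝ) with hs
  ext i
  fin_cases i
  · show advect (Zk x) f x 0 = (0:E3) 0
    rw [advect, mk3_0, Fin.sum_univ_three, hpd 0 0, hpd 0 1, hpd 0 2, hZk x]
    simp only [PiLp.smul_apply, PiLp.add_apply, smul_eq_mul, cross3, mk3_0, mk3_1, mk3_2,
      PiLp.zero_apply]
    linear_combination ((a * (‖k‖⁻¹ * (Z 1 * k 2 - Z 2 * k 1)) * c - a * Z 0 * s) * c) * hip
  · show advect (Zk x) f x 1 = (0:E3) 1
    rw [advect, mk3_1, Fin.sum_univ_three, hpd 1 0, hpd 1 1, hpd 1 2, hZk x]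
    simp only [PiLp.smul_apply, PiLp.add_apply, smul_eq_mul, cross3, mk3_0, mk3_1, mk3_2,
      PiLp.zero_apply]
    linear_combination ((a * (‖k‖⁻¹ * (Z 2 * k 0 - Z 0 * k 2)) * c - a * Z 1 * s) * c) * hip
  · show advect (Zk x) f x 2 = (0:E3) 2
    rw [advect, mk3_2, Fin.sum_univ_three, hpd 2 0, hpd 2 1, hpd 2 2, hZk x]
    simp only [PiLp.smul_apply, PiLp.add_apply, smul_eq_mul, cross3, mk3_0, mk3_1, mk3_2,
      PiLp.zero_apply]
    linear_combination ((a * (‖k‖⁻¹ * (Z 0 * k 1 - Z 1 * k 0)) * c - a * Z 2 * s) * c) * hip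

lemma norm_wave (k Z : E3) (hk : 0 < ‖k‖) (hkZ : (inner ℝ k Z : ℝ) = 0)
    (Zk : E3 → E3)
    (hZk : ∀ x, Zk x = Real.cos (inner ℝ k x : ℝ) • Z
        + (‖k‖⁻¹ * Real.sin (inner ℝ k x : ℝ)) • cross3 Z k)
    (x : E3) : ‖Zk x‖^2 = ‖Z‖^2 := by
  have hKne : ‖k‖ ≠ 0 := ne_of_gt hk
  have hKK : ‖k‖ * ‖k‖⁻¹ = 1 := mul_inv_cancel₀ hKne
  have hip : k 0 * Z 0 + k 1 * Z 1 + k 2 * Z 2 = 0 := by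
    simpa [PiLp.inner_apply, Fin.sum_univ_three, RCLike.inner_apply, mul_comm] using hkZ
  have hK2 : ‖k‖^2 = k 0^2 + k 1^2 + k 2^2 := by
    rw [← real_inner_self_eq_norm_sq]
    simp only [PiLp.inner_apply, RCLike.inner_apply, conj_trivial, Fin.sum_univ_three]; ring
  rw [← real_inner_self_eq_norm_sq, ← real_inner_self_eq_norm_sq, hZk x]
  generalize (inner ℝ k x : ℝ) = t
  have hpyth := Real.sin_sq_add_cos_sq t
  set c := Real.cos t with hc
  set s := Real.sin t with hs
  simp only [PiLp.inner_apply, RCLike.inner_apply, conj_trivial, Fin.sum_univ_three,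
    PiLp.smul_apply, PiLp.add_apply, smul_eq_mul, cross3, mk3_0, mk3_1, mk3_2]
  linear_combination (Z 0^2 + Z 1^2 + Z 2^2) * hpyth
    + (-(‖k‖⁻¹^2 * s^2 * (k 0 * Z 0 + k 1 * Z 1 + k 2 * Z 2))) * hip
    + (-((Z 0^2 + Z 1^2 + Z 2^2) * s^2 * ‖k‖⁻¹^2)) * hK2
    + ((Z 0^2 + Z 1^2 + Z 2^2) * s^2 * (‖k‖ * ‖k‖⁻¹ + 1)) * hKK

/-- The Beltrami field gives a stationary solution of incompressible
extended MHD: with `v = B* = Z_k`, `B = (1 + d_e²‖k‖²)⁻¹ Z_k` and `p = −‖Z_k‖²/2`, the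
constitutive relation, the (stationary) momentum and induction equations, and the
divergence-free conditions all hold. -/
theorem beltrami_stationary_solution
    (k Z : E3) (hk : 0 < ‖k‖) (hkZ : (inner ℝ k Z : ℝ) = 0)
    (de di : ℝ) (hde : 0 < de) (hdi : 0 ≤ di)
    (Zk : E3 → E3)
    (hZk : ∀ x, Zk x = Real.cos (inner ℝ k x : ℝ) • Z
        + (‖k‖⁻¹ * Real.sin (inner ℝ k x : ℝ)) • cross3 Z k)
    (v Bs B : E3 → E3) (p : E3 → ℝ)
    (hv : ∀ x, v x = Zk x) (hBs : ∀ x, Bs x = Zk x)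
    (hB : ∀ x, B x = (1 + de^2 * ‖k‖^2)⁻¹ • Zk x)
    (hp : ∀ x, p x = -(‖Zk x‖^2) / 2) :
    (∀ x, Bs x = B x + de^2 • ecurl (ecurl B) x) ∧
    (∀ x, advect (v x) v x + egrad p x + cross3 (Bs x) (ecurl B x) = 0) ∧
    (∀ x, ecurl (fun y => cross3 (Bs y) (v y - di • ecurl B y)) x
        + de^2 • ecurl (fun y => cross3 (ecurl v y) (ecurl B y)) x = 0) ∧
    (∀ x, ediv v x = 0) ∧ (∀ x, ediv Bs x = 0) ∧ (∀ x, ediv B x = 0) := by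
  have hpos : (0:ℝ) < 1 + de^2 * ‖k‖^2 := by positivity
  set c' : ℝ := (1 + de^2 * ‖k‖^2)⁻¹ with hc'
  have hv1 : ∀ y, v y = (1:ℝ) • Zk y := fun y => by rw [hv y, one_smul]
  have hBs1 : ∀ y, Bs y = (1:ℝ) • Zk y := fun y => by rw [hBs y, one_smul]
  have hcurlB : ∀ y, ecurl B y = (c' * ‖k‖) • Zk y :=
    fun y => ecurl_wave k Z hk hkZ Zk hZk B c' hB y
  have hcurlv : ∀ y, ecurl v y = ((1:ℝ) * ‖k‖) • Zk y :=
    fun y => ecurl_wave k Z hk hkZ Zk hZk v 1 hv1 y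
  refine ⟨?_, ?_, ?_, ?_, ?_, ?_⟩
  · -- constitutive relation
    intro x
    have hcc : ecurl (ecurl B) x = ((c' * ‖k‖ * ‖k‖)) • Zk x :=
      ecurl_wave k Z hk hkZ Zk hZk (ecurl B) (c' * ‖k‖) hcurlB x
    rw [hBs x, hB x, hcc, smul_smul, ← add_smul]
    rw [show c' + de^2 * (c' * ‖k‖ * ‖k‖) = 1 by
      rw [hc']; field_simp]
    rw [one_smul]
  · -- momentum
    intro x
    have h1 : advect (v x) v x = 0 := by
      rw [hv x]; exact advect_wave k Z hk hkZ Zk hZk v 1 hv1 x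
    have h2 : egrad p x = 0 := by
      have hpc : p = fun _ => -(‖Z‖^2)/2 := funext fun y => by
        rw [hp y, norm_wave k Z hk hkZ Zk hZk y]
      rw [hpc]
      rw [egrad, pd_const, pd_const, pd_const, mk3_zero]
    have h3 : cross3 (Bs x) (ecurl B x) = 0 := by
      rw [hBs1 x, hcurlB x]; exact cross_parallel (Zk x) 1 (c' * ‖k‖)
    rw [h1, h2, h3]; simp
  · -- induction
    intro x
    have hz1 : (fun y => cross3 (Bs y) (v y - di • ecurl B y)) = fun _ => (0:E3) := by
      funext y
      rw [hBs1 y, hv y, hcurlB y, smul_smul]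
      rw [show Zk y - (di * (c' * ‖k‖)) • Zk y = (1 - di * (c' * ‖k‖)) • Zk y by
        rw [sub_smul, one_smul]]
      exact cross_parallel (Zk y) 1 (1 - di * (c' * ‖k‖))
    have hz2 : (fun y => cross3 (ecurl v y) (ecurl B y)) = fun _ => (0:E3) := by
      funext y
      rw [hcurlv y, hcurlB y]
      exact cross_parallel (Zk y) (1 * ‖k‖) (c' * ‖k‖)
    rw [hz1, hz2, ecurl_zero]; simp
  · exact fun x => ediv_wave k Z hk hkZ Zk hZk v 1 hv1 x
  · exact fun x => ediv_wave k Z hk hkZ Zk hZk Bs 1 hBs1 x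
  · exact fun x => ediv_wave k Z hk hkZ Zk hZk B c' hB x
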